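/- Let U = (U_i)_{i∈I} be a moderate admissible covering of X and w a continuous weight on X whose associated weight m_w is admissible and satisfies the m_w-cover condition for U. Put a_i := μ(U_i) and w̃(i) := sup_{x∈U_i} w(x). Then for each 1 ≤ p < ∞ there exist constants 0 < c ≤ C < ∞ such that for every sequence (λ_i)_{i∈I} of nonnegative reals: c · ‖(λ_i a_i^{1/p} w̃(i))_i‖_{ℓ^p(I)} ≤ ‖Σ_{i∈I} λ_i χ_{U_i}‖_{L^p_w} ≤ C · ‖(λ_i a_i^{1/p} w̃(i))_i‖_{ℓ^p(I)}, and likewise c · ‖(λ_i a_i^{1/p−1} w̃(i))_i‖_{ℓ^p(I)} ≤ ‖Σ_{i∈I} λ_i μ(U_i)^{-1} χ_{U_i}‖_{L^p_w} ≤ C · ‖(λ_i a_i^{1/p−1} w̃(i))_i‖_{ℓ^p(I)}. -/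

import Mathlib

open MeasureTheory ENNReal
open scoped ENNReal NNReal

noncomputable section

/-- The weight on `X × X` associated to a weight `w` on `X`. -/
def mw {X : Type*} (w : X → ℝ) (x y : X) : ℝ :=
  max (w x / w y) (w y / w x)

/-- A moderate admissible covering `U = (U_i)_{i∈I}` of `X`. -/
structure ModCover (X : Type*) [TopologicalSpace X] [MeasurableSpace X]
    (μ : MeasureTheory.Measure X) (I : Type*) where
  U : I → Set X
  measU : ∀ i, MeasurableSet (U i)
  relCompact : ∀ i, IsCompact (closure (U i))
  interiorNonempty : ∀ i, (interior (U i)).Nonempty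
  covers : (⋃ i, U i) = Set.univ
  N : ℕ
  overlapFin : ∀ j : I, {i : I | (U i ∩ U j).Nonempty}.Finite
  overlapBound : ∀ j : I, {i : I | (U i ∩ U j).Nonempty}.ncard ≤ N
  measLower : ℝ≥0∞
  measLowerPos : 0 < measLower
  lower : ∀ i, measLower ≤ μ (U i)
  finiteMeas : ∀ i, μ (U i) < ⊤
  Ctilde : ℝ≥0∞
  CtildeFin : Ctilde < ⊤
  moderate : ∀ i j, (U i ∩ U j).Nonempty → μ (U i) ≤ Ctilde * μ (U j)

lemma tsum_rpow_aux {I : Type*} {a : I → ℝ≥0∞} {s : Finset I}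
    (hs : ∀ i ∉ s, a i = 0) {p : ℝ} (hp : 1 ≤ p) :
    (∑' i, a i) ^ p ≤ (s.card : ℝ≥0∞) ^ p * ∑' i, a i ^ p ∧
      ∑' i, a i ^ p ≤ (s.card : ℝ≥0∞) * (∑' i, a i) ^ p := by
  have hp0 : (0:ℝ) < p := lt_of_lt_of_le one_pos hp
  have hs' : ∀ i ∉ s, a i ^ p = 0 := fun i hi => by
    rw [hs i hi, ENNReal.zero_rpow_of_pos hp0]
  rw [tsum_eq_sum hs, tsum_eq_sum hs']
  constructor
  · have h1 : ∑ i ∈ s, a i ≤ (s.card : ℝ≥0∞) * s.sup a := by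
      calc ∑ i ∈ s, a i ≤ s.card • s.sup a :=
            Finset.sum_le_card_nsmul s a _ fun i hi => Finset.le_sup hi
        _ = (s.card : ℝ≥0∞) * s.sup a := nsmul_eq_mul _ _
    have h2 : (s.sup a) ^ p ≤ ∑ i ∈ s, a i ^ p := by
      rcases s.eq_empty_or_nonempty with rfl | hne
      · simp [ENNReal.zero_rpow_of_pos hp0]
      · obtain ⟨j, hj, hjeq⟩ := Finset.exists_mem_eq_sup s hne a
        rw [hjeq]
        exact Finset.single_le_sum (f := fun i => a i ^ p) (fun i _ => zero_le) hj
    calc (∑ i ∈ s, a i) ^ p ≤ ((s.card : ℝ≥0∞) * s.sup a) ^ p :=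
          ENNReal.rpow_le_rpow h1 hp0.le
      _ = (s.card : ℝ≥0∞) ^ p * (s.sup a) ^ p := ENNReal.mul_rpow_of_nonneg _ _ hp0.le
      _ ≤ (s.card : ℝ≥0∞) ^ p * ∑ i ∈ s, a i ^ p := mul_le_mul_right h2 _
  · calc ∑ i ∈ s, a i ^ p ≤ s.card • ((∑ i ∈ s, a i) ^ p) :=
        Finset.sum_le_card_nsmul s _ _ fun i hi =>
          ENNReal.rpow_le_rpow (Finset.single_le_sum (f := a) (fun i _ => zero_le) hi) hp0.le
      _ = (s.card : ℝ≥0∞) * (∑ i ∈ s, a i) ^ p := nsmul_eq_mul _ _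

lemma modcover_point_finite {X : Type*} [TopologicalSpace X] [MeasurableSpace X]
    {μ : MeasureTheory.Measure X} {I : Type*} (𝒰 : ModCover X μ I) (x : X) :
    {i : I | x ∈ 𝒰.U i}.Finite ∧ {i : I | x ∈ 𝒰.U i}.ncard ≤ 𝒰.N := by
  have hx : x ∈ ⋃ i, 𝒰.U i := 𝒰.covers ▸ Set.mem_univ x
  obtain ⟨j, hj⟩ := Set.mem_iUnion.mp hx
  have hsub : {i : I | x ∈ 𝒰.U i} ⊆ {i | (𝒰.U i ∩ 𝒰.U j).Nonempty} := fun i hi => ⟨x, hi, hj⟩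
  exact ⟨(𝒰.overlapFin j).subset hsub,
    le_trans (Set.ncard_le_ncard hsub (𝒰.overlapFin j)) (𝒰.overlapBound j)⟩

lemma master {X : Type*} [TopologicalSpace X] [MeasurableSpace X] [BorelSpace X]
    (μ : MeasureTheory.Measure X) {I : Type*} [Countable I] (𝒰 : ModCover X μ I)
    (w : X → ℝ) (hw : Continuous w) (hwpos : ∀ x, 0 < w x)
    (CmU : ℝ) (hcover : ∀ i, ∀ x ∈ 𝒰.U i, ∀ y ∈ 𝒰.U i, mw w x y ≤ CmU)
    (hCmU : 1 ≤ CmU) (hN : 0 < 𝒰.N)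
    (p : ℝ) (hp : 1 ≤ p) (lam : I → ℝ) (hlam : ∀ i, 0 ≤ lam i) :
    ((((ENNReal.ofReal CmU) ^ p * (𝒰.N : ℝ≥0∞)) ^ (1 / p))⁻¹ *
        (∑' i, (ENNReal.ofReal (lam i) * μ (𝒰.U i) ^ (1 / p) *
            ENNReal.ofReal (sSup (w '' 𝒰.U i))) ^ p) ^ (1 / p) ≤
      MeasureTheory.eLpNorm
        (fun x => (∑' i, lam i * (𝒰.U i).indicator (fun _ => (1 : ℝ)) x) * w x)
        (ENNReal.ofReal p) μ) ∧
    (MeasureTheory.eLpNorm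
        (fun x => (∑' i, lam i * (𝒰.U i).indicator (fun _ => (1 : ℝ)) x) * w x)
        (ENNReal.ofReal p) μ ≤
      (𝒰.N : ℝ≥0∞) *
        (∑' i, (ENNReal.ofReal (lam i) * μ (𝒰.U i) ^ (1 / p) *
            ENNReal.ofReal (sSup (w '' 𝒰.U i))) ^ p) ^ (1 / p)) := by
  have hp0 : (0:ℝ) < p := lt_of_lt_of_le one_pos hp
  have hq0 : (ENNReal.ofReal p) ≠ 0 := (ENNReal.ofReal_pos.mpr hp0).ne'
  have hqt : (ENNReal.ofReal p) ≠ ∞ := ENNReal.ofReal_ne_top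
  set c : I → ℝ≥0∞ := fun i => ENNReal.ofReal (lam i) with hc
  set W : X → ℝ≥0∞ := fun x => ENNReal.ofReal (w x) with hWdef
  set G : X → ℝ≥0∞ := fun x => ∑' i, c i * (𝒰.U i).indicator (fun _ => (1:ℝ≥0∞)) x with hG
  set Wt : I → ℝ≥0∞ := fun i => ENNReal.ofReal (sSup (w '' 𝒰.U i)) with hWt
  -- measurability
  have hWmeas : Measurable W := ENNReal.measurable_ofReal.comp hw.measurable
  have hWp : Measurable fun x => W x ^ p :=
    (ENNReal.continuous_rpow_const.measurable).comp hWmeas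
  have hterm : ∀ i : I, Measurable fun x =>
      c i ^ p * (𝒰.U i).indicator (fun _ => (1:ℝ≥0∞)) x * W x ^ p := fun i =>
    (measurable_const.mul (measurable_const.indicator (𝒰.measU i))).mul hWp
  -- pointwise identification of the norm
  have hnorm : ∀ x, (‖(∑' i, lam i * (𝒰.U i).indicator (fun _ => (1:ℝ)) x) * w x‖ₑ : ℝ≥0∞)
      = G x * W x := by
    intro x
    have hnn : ∀ i, 0 ≤ lam i * (𝒰.U i).indicator (fun _ => (1:ℝ)) x :=
      fun i => mul_nonneg (hlam i) (Set.indicator_nonneg (fun _ _ => zero_le_one) x)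
    have hsupp : Function.support (fun i => lam i * (𝒰.U i).indicator (fun _ => (1:ℝ)) x)
        ⊆ {i | x ∈ 𝒰.U i} := by
      intro i hi
      by_contra hxi
      refine hi ?_
      show lam i * (𝒰.U i).indicator (fun _ => (1:ℝ)) x = 0
      have hxi' : x ∉ 𝒰.U i := hxi
      rw [Set.indicator_of_notMem hxi', mul_zero]
    have hsum : Summable fun i => lam i * (𝒰.U i).indicator (fun _ => (1:ℝ)) x :=
      summable_of_finite_support ((modcover_point_finite 𝒰 x).1.subset hsupp)
    have h0 : 0 ≤ ∑' i, lam i * (𝒰.U i).indicator (fun _ => (1:ℝ)) x := tsum_nonneg hnn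
    rw [Real.enorm_eq_ofReal (mul_nonneg h0 (hwpos x).le), ENNReal.ofReal_mul h0,
        ENNReal.ofReal_tsum_of_nonneg hnn hsum]
    congr 1
    refine tsum_congr fun i => ?_
    by_cases hxi : x ∈ 𝒰.U i
    · simp [Set.indicator_of_mem hxi, hc]
    · simp [Set.indicator_of_notMem hxi]
  have heLp : MeasureTheory.eLpNorm
      (fun x => (∑' i, lam i * (𝒰.U i).indicator (fun _ => (1:ℝ)) x) * w x)
      (ENNReal.ofReal p) μ = (∫⁻ x, (G x * W x) ^ p ∂μ) ^ (1/p) := by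
    rw [MeasureTheory.eLpNorm_eq_lintegral_rpow_enorm_toReal hq0 hqt,
        ENNReal.toReal_ofReal hp0.le]
    congr 1
    exact lintegral_congr fun x => by rw [hnorm x]
  set L := ∫⁻ x, (G x * W x) ^ p ∂μ with hL
  set T : I → ℝ≥0∞ := fun i => c i ^ p * ∫⁻ x in 𝒰.U i, W x ^ p ∂μ with hT
  have hcfin : ∀ i : I, c i ^ p ≠ ∞ :=
    fun i => ENNReal.rpow_ne_top_of_nonneg hp0.le ENNReal.ofReal_ne_top
  have hTi : ∀ i, (∫⁻ x, c i ^ p * (𝒰.U i).indicator (fun _ => (1:ℝ≥0∞)) x * W x ^ p ∂μ)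
      = T i := by
    intro i
    simp_rw [mul_assoc]
    rw [lintegral_const_mul' _ _ (hcfin i)]
    congr 1
    rw [← lintegral_indicator (𝒰.measU i)]
    refine lintegral_congr fun x => ?_
    by_cases hxi : x ∈ 𝒰.U i <;>
      simp [Set.indicator_of_mem, Set.indicator_of_notMem, hxi]
  have key : ∑' i, T i
      = ∫⁻ x, (∑' i, c i ^ p * (𝒰.U i).indicator (fun _ => (1:ℝ≥0∞)) x) * W x ^ p ∂μ := by
    calc ∑' i, T i
        = ∑' i, ∫⁻ x, c i ^ p * (𝒰.U i).indicator (fun _ => (1:ℝ≥0∞)) x * W x ^ p ∂μ :=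
          (tsum_congr hTi).symm
      _ = ∫⁻ x, ∑' i, c i ^ p * (𝒰.U i).indicator (fun _ => (1:ℝ≥0∞)) x * W x ^ p ∂μ :=
          (MeasureTheory.lintegral_tsum fun i => (hterm i).aemeasurable).symm
      _ = _ := lintegral_congr fun x => ENNReal.tsum_mul_right
  have hind : ∀ (i : I) (x : X),
      (c i * (𝒰.U i).indicator (fun _ => (1:ℝ≥0∞)) x) ^ p
        = c i ^ p * (𝒰.U i).indicator (fun _ => (1:ℝ≥0∞)) x := by
    intro i x
    by_cases hxi : x ∈ 𝒰.U i
    · simp [Set.indicator_of_mem hxi]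
    · simp [Set.indicator_of_notMem hxi, ENNReal.zero_rpow_of_pos hp0]
  -- pointwise two-sided bounds
  have hpt : ∀ x, (G x) ^ p ≤ (𝒰.N : ℝ≥0∞) ^ p *
        ∑' i, c i ^ p * (𝒰.U i).indicator (fun _ => (1:ℝ≥0∞)) x ∧
      (∑' i, c i ^ p * (𝒰.U i).indicator (fun _ => (1:ℝ≥0∞)) x) ≤
        (𝒰.N : ℝ≥0∞) * (G x) ^ p := by
    intro x
    obtain ⟨hfin, hcard⟩ := modcover_point_finite 𝒰 x
    have hs0 : ∀ i ∉ hfin.toFinset, c i * (𝒰.U i).indicator (fun _ => (1:ℝ≥0∞)) x = 0 := by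
      intro i hi
      rw [Set.indicator_of_notMem (by simpa [Set.Finite.mem_toFinset] using hi), mul_zero]
    have hcard' : ((hfin.toFinset.card : ℕ) : ℝ≥0∞) ≤ (𝒰.N : ℝ≥0∞) := by
      have h : hfin.toFinset.card ≤ 𝒰.N := by
        rw [← Set.ncard_eq_toFinset_card _ hfin]; exact hcard
      exact_mod_cast h
    obtain ⟨ha1, ha2⟩ := tsum_rpow_aux hs0 hp
    rw [tsum_congr (fun i => hind i x)] at ha1 ha2
    constructor
    · exact le_trans ha1 (mul_le_mul_left (ENNReal.rpow_le_rpow hcard' hp0.le) _)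
    · exact le_trans ha2 (mul_le_mul_left hcard' _)
  have hL_upper : L ≤ (𝒰.N : ℝ≥0∞) ^ p * ∑' i, T i := by
    calc L = ∫⁻ x, G x ^ p * W x ^ p ∂μ :=
          lintegral_congr fun x => ENNReal.mul_rpow_of_nonneg _ _ hp0.le
      _ ≤ ∫⁻ x, ((𝒰.N : ℝ≥0∞) ^ p *
            ∑' i, c i ^ p * (𝒰.U i).indicator (fun _ => (1:ℝ≥0∞)) x) * W x ^ p ∂μ :=
          lintegral_mono fun x => mul_le_mul_left (hpt x).1 _
      _ = (𝒰.N : ℝ≥0∞) ^ p * ∫⁻ x,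
            (∑' i, c i ^ p * (𝒰.U i).indicator (fun _ => (1:ℝ≥0∞)) x) * W x ^ p ∂μ := by
          simp_rw [mul_assoc]
          exact lintegral_const_mul' _ _
            (ENNReal.rpow_ne_top_of_nonneg hp0.le (ENNReal.natCast_ne_top _))
      _ = (𝒰.N : ℝ≥0∞) ^ p * ∑' i, T i := by rw [key]
  have hL_lower : ∑' i, T i ≤ (𝒰.N : ℝ≥0∞) * L := by
    calc ∑' i, T i
        = ∫⁻ x, (∑' i, c i ^ p * (𝒰.U i).indicator (fun _ => (1:ℝ≥0∞)) x) * W x ^ p ∂μ := key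
      _ ≤ ∫⁻ x, ((𝒰.N : ℝ≥0∞) * G x ^ p) * W x ^ p ∂μ :=
          lintegral_mono fun x => mul_le_mul_left (hpt x).2 _
      _ = (𝒰.N : ℝ≥0∞) * ∫⁻ x, G x ^ p * W x ^ p ∂μ := by
          simp_rw [mul_assoc]
          exact lintegral_const_mul' _ _ (ENNReal.natCast_ne_top _)
      _ = (𝒰.N : ℝ≥0∞) * L := by
          rw [lintegral_congr fun x => (ENNReal.mul_rpow_of_nonneg (G x) (W x) hp0.le).symm]
  -- expand the `A` terms
  have hAi : ∀ i, (c i * μ (𝒰.U i) ^ (1/p) * Wt i) ^ p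
      = c i ^ p * μ (𝒰.U i) * Wt i ^ p := by
    intro i
    rw [ENNReal.mul_rpow_of_nonneg _ _ hp0.le, ENNReal.mul_rpow_of_nonneg _ _ hp0.le,
        ← ENNReal.rpow_mul, one_div_mul_cancel hp0.ne', ENNReal.rpow_one]
  have hUne : ∀ i, (𝒰.U i).Nonempty := fun i => (𝒰.interiorNonempty i).mono interior_subset
  have hbdd : ∀ i, BddAbove (w '' 𝒰.U i) := fun i =>
    BddAbove.mono (Set.image_mono (f := w) subset_closure)
      ((𝒰.relCompact i).bddAbove_image hw.continuousOn)
  have hwle : ∀ i, ∀ x ∈ 𝒰.U i, w x ≤ sSup (w '' 𝒰.U i) :=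
    fun i x hx => le_csSup (hbdd i) (Set.mem_image_of_mem w hx)
  have hsle : ∀ i, ∀ x ∈ 𝒰.U i, sSup (w '' 𝒰.U i) ≤ CmU * w x := by
    intro i x hx
    refine csSup_le ((hUne i).image w) ?_
    rintro _ ⟨y, hy, rfl⟩
    have h1 : w y / w x ≤ CmU := le_trans (le_max_right _ _) (hcover i x hx y hy)
    exact (div_le_iff₀ (hwpos x)).mp h1
  set M : ℝ≥0∞ := ENNReal.ofReal CmU with hM
  have hT_le_A : ∀ i, T i ≤ c i ^ p * μ (𝒰.U i) * Wt i ^ p := by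
    intro i
    have h1 : ∫⁻ x in 𝒰.U i, W x ^ p ∂μ ≤ ∫⁻ _x in 𝒰.U i, Wt i ^ p ∂μ :=
      setLIntegral_mono' (𝒰.measU i) fun x hx =>
        ENNReal.rpow_le_rpow (ENNReal.ofReal_le_ofReal (hwle i x hx)) hp0.le
    rw [setLIntegral_const] at h1
    calc T i ≤ c i ^ p * (Wt i ^ p * μ (𝒰.U i)) := mul_le_mul_right h1 _
      _ = c i ^ p * μ (𝒰.U i) * Wt i ^ p := by ring
  have hA_le_T : ∀ i, c i ^ p * μ (𝒰.U i) * Wt i ^ p ≤ M ^ p * T i := by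
    intro i
    have h2 : ∫⁻ _x in 𝒰.U i, Wt i ^ p ∂μ ≤ ∫⁻ x in 𝒰.U i, M ^ p * W x ^ p ∂μ := by
      refine setLIntegral_mono' (𝒰.measU i) fun x hx => ?_
      calc Wt i ^ p ≤ (M * W x) ^ p := by
            refine ENNReal.rpow_le_rpow ?_ hp0.le
            rw [hWt, hM, hWdef, ← ENNReal.ofReal_mul (by linarith : (0:ℝ) ≤ CmU)]
            exact ENNReal.ofReal_le_ofReal (hsle i x hx)
        _ = M ^ p * W x ^ p := ENNReal.mul_rpow_of_nonneg _ _ hp0.le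
    rw [setLIntegral_const, lintegral_const_mul' _ _
      (ENNReal.rpow_ne_top_of_nonneg hp0.le ENNReal.ofReal_ne_top)] at h2
    calc c i ^ p * μ (𝒰.U i) * Wt i ^ p = c i ^ p * (Wt i ^ p * μ (𝒰.U i)) := by ring
      _ ≤ c i ^ p * (M ^ p * ∫⁻ x in 𝒰.U i, W x ^ p ∂μ) := mul_le_mul_right h2 _
      _ = M ^ p * T i := by rw [hT]; ring
  set A := ∑' i, (c i * μ (𝒰.U i) ^ (1/p) * Wt i) ^ p with hA
  have hAexp : A = ∑' i, c i ^ p * μ (𝒰.U i) * Wt i ^ p := tsum_congr hAi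
  have hAupper : A ≤ M ^ p * (𝒰.N : ℝ≥0∞) * L := by
    rw [hAexp]
    calc ∑' i, c i ^ p * μ (𝒰.U i) * Wt i ^ p ≤ ∑' i, M ^ p * T i :=
          ENNReal.tsum_le_tsum hA_le_T
      _ = M ^ p * ∑' i, T i := ENNReal.tsum_mul_left
      _ ≤ M ^ p * ((𝒰.N : ℝ≥0∞) * L) := mul_le_mul_right hL_lower _
      _ = M ^ p * (𝒰.N : ℝ≥0∞) * L := (mul_assoc _ _ _).symm
  have hLA : L ≤ (𝒰.N : ℝ≥0∞) ^ p * A := by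
    rw [hAexp]
    exact le_trans hL_upper (mul_le_mul_right (ENNReal.tsum_le_tsum hT_le_A) _)
  rw [heLp]
  constructor
  · -- lower bound
    have h1 : A ^ (1/p) ≤ (M ^ p * (𝒰.N : ℝ≥0∞)) ^ (1/p) * L ^ (1/p) := by
      calc A ^ (1/p) ≤ (M ^ p * (𝒰.N : ℝ≥0∞) * L) ^ (1/p) :=
            ENNReal.rpow_le_rpow hAupper (by positivity)
        _ = (M ^ p * (𝒰.N : ℝ≥0∞)) ^ (1/p) * L ^ (1/p) :=
            ENNReal.mul_rpow_of_nonneg _ _ (by positivity)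
    set D := (M ^ p * (𝒰.N : ℝ≥0∞)) ^ (1/p) with hD
    have hbase0 : (0:ℝ≥0∞) < M ^ p * (𝒰.N : ℝ≥0∞) :=
      ENNReal.mul_pos (ENNReal.rpow_pos (ENNReal.ofReal_pos.mpr (by linarith))
        ENNReal.ofReal_ne_top).ne' (by exact_mod_cast hN.ne')
    have hbaset : M ^ p * (𝒰.N : ℝ≥0∞) ≠ ∞ :=
      ENNReal.mul_ne_top (ENNReal.rpow_ne_top_of_nonneg hp0.le ENNReal.ofReal_ne_top)
        (ENNReal.natCast_ne_top _)
    have hD0 : D ≠ 0 := (ENNReal.rpow_pos hbase0 hbaset).ne'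
    have hDt : D ≠ ∞ := ENNReal.rpow_ne_top_of_nonneg (by positivity) hbaset
    calc D⁻¹ * A ^ (1/p) ≤ D⁻¹ * (D * L ^ (1/p)) := mul_le_mul_right h1 _
      _ = (D⁻¹ * D) * L ^ (1/p) := (mul_assoc _ _ _).symm
      _ = L ^ (1/p) := by rw [ENNReal.inv_mul_cancel hD0 hDt, one_mul]
  · calc L ^ (1/p) ≤ ((𝒰.N : ℝ≥0∞) ^ p * A) ^ (1/p) :=
          ENNReal.rpow_le_rpow hLA (by positivity)
      _ = ((𝒰.N : ℝ≥0∞) ^ p) ^ (1/p) * A ^ (1/p) :=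
          ENNReal.mul_rpow_of_nonneg _ _ (by positivity)
      _ = (𝒰.N : ℝ≥0∞) * A ^ (1/p) := by
          rw [← ENNReal.rpow_mul, mul_one_div_cancel hp0.ne', ENNReal.rpow_one]

theorem sequence_spaces_of_Lpw
    {X : Type*} [TopologicalSpace X] [T2Space X] [LocallyCompactSpace X]
    [SigmaCompactSpace X] [MeasurableSpace X] [BorelSpace X]
    (μ : MeasureTheory.Measure X) [μ.Regular] [μ.IsOpenPosMeasure]
    {I : Type*} [Countable I]
    (𝒰 : ModCover X μ I)
    (w : X → ℝ) (hw : Continuous w) (hwpos : ∀ x, 0 < w x)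
    -- the `m_w`-cover condition
    (CmU : ℝ) (hcover : ∀ i, ∀ x ∈ 𝒰.U i, ∀ y ∈ 𝒰.U i, mw w x y ≤ CmU) :
    ∀ p : ℝ, 1 ≤ p →
      ∃ c C : ℝ≥0∞, 0 < c ∧ C < ⊤ ∧
        ∀ lam : I → ℝ, (∀ i, 0 ≤ lam i) →
          (c * (∑' i, (ENNReal.ofReal (lam i) * μ (𝒰.U i) ^ (1 / p) *
                  ENNReal.ofReal (sSup (w '' 𝒰.U i))) ^ p) ^ (1 / p) ≤
              MeasureTheory.eLpNorm
                (fun x => (∑' i, lam i * (𝒰.U i).indicator (fun _ => (1 : ℝ)) x) * w x)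
                (ENNReal.ofReal p) μ ∧
            MeasureTheory.eLpNorm
                (fun x => (∑' i, lam i * (𝒰.U i).indicator (fun _ => (1 : ℝ)) x) * w x)
                (ENNReal.ofReal p) μ ≤
              C * (∑' i, (ENNReal.ofReal (lam i) * μ (𝒰.U i) ^ (1 / p) *
                  ENNReal.ofReal (sSup (w '' 𝒰.U i))) ^ p) ^ (1 / p)) ∧
          (c * (∑' i, (ENNReal.ofReal (lam i) * μ (𝒰.U i) ^ (1 / p - 1) *
                  ENNReal.ofReal (sSup (w '' 𝒰.U i))) ^ p) ^ (1 / p) ≤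
              MeasureTheory.eLpNorm
                (fun x => (∑' i, lam i * (μ (𝒰.U i)).toReal⁻¹ *
                    (𝒰.U i).indicator (fun _ => (1 : ℝ)) x) * w x)
                (ENNReal.ofReal p) μ ∧
            MeasureTheory.eLpNorm
                (fun x => (∑' i, lam i * (μ (𝒰.U i)).toReal⁻¹ *
                    (𝒰.U i).indicator (fun _ => (1 : ℝ)) x) * w x)
                (ENNReal.ofReal p) μ ≤
              C * (∑' i, (ENNReal.ofReal (lam i) * μ (𝒰.U i) ^ (1 / p - 1) *
                  ENNReal.ofReal (sSup (w '' 𝒰.U i))) ^ p) ^ (1 / p)) := by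
  intro p hp
  have hp0 : (0:ℝ) < p := lt_of_lt_of_le one_pos hp
  rcases isEmpty_or_nonempty I with hI | hI
  · refine ⟨1, 1, one_pos, one_lt_top, fun lam hlam => ?_⟩
    have hz : ∀ g : I → X → ℝ, (fun x => (∑' i, g i x) * w x) = fun _ => (0:ℝ) := by
      intro g; funext x; rw [tsum_empty, zero_mul]
    have hA : ∀ f : I → ℝ≥0∞, (∑' i, f i) = 0 := fun f => tsum_empty
    constructor
    · constructor
      · rw [hA, ENNReal.zero_rpow_of_pos (by positivity), mul_zero]
        exact zero_le
      · rw [hz (fun i x => lam i * (𝒰.U i).indicator (fun _ => (1:ℝ)) x),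
            MeasureTheory.eLpNorm_zero']
        exact zero_le
    · constructor
      · rw [hA, ENNReal.zero_rpow_of_pos (by positivity), mul_zero]
        exact zero_le
      · rw [hz (fun i x => lam i * (μ (𝒰.U i)).toReal⁻¹ *
            (𝒰.U i).indicator (fun _ => (1:ℝ)) x), MeasureTheory.eLpNorm_zero']
        exact zero_le
  · -- nonempty index set
    obtain ⟨j⟩ := hI
    have hUne : ∀ i, (𝒰.U i).Nonempty := fun i => (𝒰.interiorNonempty i).mono interior_subset
    have hN : 0 < 𝒰.N := by
      have hmem : j ∈ {i : I | (𝒰.U i ∩ 𝒰.U j).Nonempty} := by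
        obtain ⟨x, hx⟩ := hUne j
        exact ⟨x, hx, hx⟩
      have h1 : 0 < {i : I | (𝒰.U i ∩ 𝒰.U j).Nonempty}.ncard :=
        (Set.ncard_pos (𝒰.overlapFin j)).mpr ⟨j, hmem⟩
      exact lt_of_lt_of_le h1 (𝒰.overlapBound j)
    have hCmU1 : (1:ℝ) ≤ CmU := by
      obtain ⟨x, hx⟩ := hUne j
      have h1 := hcover j x hx x hx
      have h2 : mw w x x = 1 := by
        rw [mw, div_self (hwpos x).ne', max_self]
      linarith [h1, h2.symm.le]
    refine ⟨(((ENNReal.ofReal CmU) ^ p * (𝒰.N : ℝ≥0∞)) ^ (1 / p))⁻¹, (𝒰.N : ℝ≥0∞), ?_, ?_,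
      fun lam hlam => ?_⟩
    · rw [ENNReal.inv_pos]
      exact ENNReal.rpow_ne_top_of_nonneg (by positivity)
        (ENNReal.mul_ne_top (ENNReal.rpow_ne_top_of_nonneg hp0.le ENNReal.ofReal_ne_top)
          (ENNReal.natCast_ne_top _))
    · exact ENNReal.natCast_lt_top _
    constructor
    · exact master μ 𝒰 w hw hwpos CmU hcover hCmU1 hN p hp lam hlam
    · -- second statement, via `master` applied to rescaled coefficients
      have hlam' : ∀ i, 0 ≤ lam i * (μ (𝒰.U i)).toReal⁻¹ := fun i =>
        mul_nonneg (hlam i) (inv_nonneg.mpr ENNReal.toReal_nonneg)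
      have h := master μ 𝒰 w hw hwpos CmU hcover hCmU1 hN p hp
        (fun i => lam i * (μ (𝒰.U i)).toReal⁻¹) hlam'
      have htsum : (∑' i, (ENNReal.ofReal (lam i * (μ (𝒰.U i)).toReal⁻¹) *
            μ (𝒰.U i) ^ (1 / p) * ENNReal.ofReal (sSup (w '' 𝒰.U i))) ^ p)
          = ∑' i, (ENNReal.ofReal (lam i) * μ (𝒰.U i) ^ (1 / p - 1) *
            ENNReal.ofReal (sSup (w '' 𝒰.U i))) ^ p := by
        refine tsum_congr fun i => ?_
        have hμ0 : μ (𝒰.U i) ≠ 0 := (lt_of_lt_of_le 𝒰.measLowerPos (𝒰.lower i)).ne'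
        have hμt : μ (𝒰.U i) ≠ ∞ := (𝒰.finiteMeas i).ne
        have htpos : 0 < (μ (𝒰.U i)).toReal := ENNReal.toReal_pos hμ0 hμt
        have hkey : ENNReal.ofReal (lam i * (μ (𝒰.U i)).toReal⁻¹) * μ (𝒰.U i) ^ (1 / p)
            = ENNReal.ofReal (lam i) * μ (𝒰.U i) ^ (1 / p - 1) := by
          rw [ENNReal.ofReal_mul (hlam i), ENNReal.ofReal_inv_of_pos htpos,
              ENNReal.ofReal_toReal hμt,
              show (1 / p - 1 : ℝ) = 1 / p + (-1) by ring,
              ENNReal.rpow_add _ _ hμ0 hμt, ENNReal.rpow_neg_one]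
          ring
        rw [hkey]
      rw [htsum] at h
      exact h
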